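/- arXiv:1201.4901 — 2 statements merged into one kernel-verified Lean document; each statement's English description precedes it below -/
import Mathlib

section
/- Let $(W,S)$ be a Coxeter group. For any $x, y \in W$, the set $\{uu' : u \le x, u' \le y\}$ (where $\le$ is the Bruhat order) has a unique maximal element with respect to the Bruhat order, denoted $x * y$ (the Demazure product). -/
open List CoxeterSystem

attribute [local instance] Classical.propDecidable

/-- The Bruhat order on a Coxeter group, via the subword property: `u ≤ w` iff some
(equivalently, any) reduced word for `w` contains a subword whose product is `u`. -/
def CoxeterSystem.BruhatLE {B W : Type*} [Group W] {M : CoxeterMatrix B}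
    (cs : CoxeterSystem M W) (u w : W) : Prop :=
  ∃ ω : List B, cs.IsReduced ω ∧ cs.wordProd ω = w ∧
    ∃ ω' : List B, ω'.Sublist ω ∧ cs.wordProd ω' = u


namespace BruhatAux

variable {B W : Type*} [Group W] {M : CoxeterMatrix B} (cs : CoxeterSystem M W)

local prefix:100 "s" => cs.simple
local prefix:100 "π" => cs.wordProd
local prefix:100 "ℓ" => cs.length
local prefix:100 "ris" => cs.rightInvSeq
local prefix:100 "lis" => cs.leftInvSeq

theorem ris_cons (i : B) (ω : List B) :
    ris (i :: ω) = ((π ω)⁻¹ * s i * π ω) :: ris ω := rfl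

/-- The sign endomorphism associated to a generator. -/
noncomputable def eta (i : B) : Function.End (W × ℤˣ) :=
  fun p => (s i * p.1 * s i, (if p.1 = s i then -1 else 1) * p.2)

/-- Product of `eta`s along a word. -/
noncomputable def F (ω : List B) : Function.End (W × ℤˣ) := (ω.map (eta cs)).prod

@[simp] theorem F_nil : F cs ([] : List B) = 1 := by simp [F]

theorem F_cons (i : B) (ω : List B) : F cs (i :: ω) = eta cs i * F cs ω := by
  simp [F]

theorem F_append (ω ω' : List B) : F cs (ω ++ ω') = F cs ω * F cs ω' := by
  simp [F]

theorem F_apply (ω : List B) (t : W) (ε : ℤˣ) :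
    F cs ω (t, ε) = (π ω * t * (π ω)⁻¹, (-1) ^ ((ris ω).count t) * ε) := by
  induction ω with
  | nil => simp; rfl
  | cons i ω ih =>
    rw [F_cons]
    have : (eta cs i * F cs ω) (t, ε) = eta cs i (F cs ω (t, ε)) := rfl
    rw [this, ih, ris_cons, eta]
    simp only [List.count_cons]
    have hcond : (π ω * t * (π ω)⁻¹ = s i) ↔ (((π ω)⁻¹ * s i * π ω) == t) = true := by
      rw [beq_iff_eq]
      constructor
      · intro h
        rw [← h]; group
      · intro h
        rw [← h]; group
    by_cases hc : π ω * t * (π ω)⁻¹ = s i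
    · rw [if_pos hc, if_pos (hcond.mp hc)]
      refine Prod.ext ?_ ?_
      · show s i * (π ω * t * (π ω)⁻¹) * s i = π (i :: ω) * t * (π (i :: ω))⁻¹
        rw [cs.wordProd_cons]
        rw [mul_inv_rev, cs.inv_simple]
        group
      · show (-1) * ((-1) ^ (ris ω).count t * ε) = (-1) ^ ((ris ω).count t + 1) * ε
        rw [pow_succ, ← mul_assoc, mul_comm (-1 : ℤˣ) ((-1 : ℤˣ) ^ (ris ω).count t)]
    · rw [if_neg hc, if_neg (fun h => hc (hcond.mpr h))]
      refine Prod.ext ?_ ?_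
      · show s i * (π ω * t * (π ω)⁻¹) * s i = π (i :: ω) * t * (π (i :: ω))⁻¹
        rw [cs.wordProd_cons, mul_inv_rev, cs.inv_simple]
        group
      · show 1 * ((-1) ^ (ris ω).count t * ε) = (-1) ^ ((ris ω).count t + 0) * ε
        rw [one_mul, add_zero]

theorem alt_drop (i i' : B) : ∀ (j n : ℕ), (alternatingWord i i' n).drop j = alternatingWord i i' (n - j) := by
  intro j
  induction j with
  | zero => intro n; simp
  | succ j ih =>
    intro n
    match n with
    | 0 => simp [alternatingWord]
    | n + 1 =>
      rw [alternatingWord_succ', List.drop_succ_cons, ih n]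
      congr 1
      omega

theorem alt_getElem? (i i' : B) {n j : ℕ} (h : j < n) :
    (alternatingWord i i' n)[j]? = some (if Even (n - j) then i else i') := by
  have h0 : (alternatingWord i i' n)[j]? = ((alternatingWord i i' n).drop j)[0]? := by
    rw [List.getElem?_drop, Nat.add_zero]
  rw [h0, alt_drop]
  obtain ⟨m, hm⟩ : ∃ m, n - j = m + 1 := ⟨n - j - 1, by omega⟩
  rw [hm, alternatingWord_succ']
  simp only [List.getElem?_cons_zero, Option.some.injEq]
  rcases Nat.even_or_odd m with he | ho
  · rw [if_pos he, if_neg (by simp [Nat.even_add_one, he])]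
  · rw [if_neg (by simpa using ho), if_pos (by simp [Nat.even_add_one]; exact ho)]

theorem simple_mul_pow (i i' : B) (k : ℕ) :
    s i' * (s i * s i') ^ k = ((s i * s i') ^ k)⁻¹ * s i' := by
  induction k with
  | zero => simp
  | succ k ih =>
    have h1 : s i' * (s i * s i') = (s i * s i')⁻¹ * s i' := by
      rw [mul_inv_rev, cs.inv_simple, cs.inv_simple]
      group
    rw [pow_succ', ← mul_assoc, h1, mul_assoc, ih, ← mul_assoc, ← mul_inv_rev, ← pow_succ, ← pow_succ']

theorem pow_card_eq_one (i i' : B) : (s i * s i') ^ (M i i' * 2) = 1 := by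
  rw [pow_mul, cs.simple_mul_simple_pow, one_pow]

theorem ris_alt_getD (i i' : B) {j : ℕ} (h : j < M i i' * 2) :
    (cs.rightInvSeq (alternatingWord i i' (M i i' * 2))).getD j 1
      = (s i * s i') ^ (j + 1) * s i' := by
  set n := M i i' * 2 with hn
  set c := s i * s i' with hc
  rw [cs.getD_rightInvSeq, alt_getElem? i i' h, alt_drop]
  set a := n - (j + 1) with ha
  have hja : j + 1 + a = n := by omega
  have hinv : ∀ b : ℕ, (c ^ b)⁻¹ * s i' * c ^ b = (c ^ (b + b))⁻¹ * s i' := by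
    intro b
    rw [mul_assoc, simple_mul_pow, ← mul_assoc, ← mul_inv_rev, ← pow_add]
  have hfin : (c ^ a)⁻¹ = c ^ (j + 1) := by
    symm
    apply eq_inv_of_mul_eq_one_left
    rw [← pow_add, hja, hn, hc]
    exact pow_card_eq_one cs i i'
  have hsub : n - j = a + 1 := by omega
  rcases Nat.even_or_odd a with he | ho
  · have hl : ¬ Even (n - j) := by rw [hsub]; simpa [Nat.even_add_one] using he
    rw [if_neg hl]
    rw [cs.prod_alternatingWord_eq_mul_pow, if_pos he]
    simp only [Option.getD_some, Option.map_some, one_mul]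
    obtain ⟨b, hb⟩ := he
    have hb2 : a / 2 = b := by omega
    rw [hb2, hinv b, ← hb, hfin]
  · have hl : Even (n - j) := by rw [hsub]; simpa [Nat.even_add_one] using ho
    rw [if_pos hl]
    rw [cs.prod_alternatingWord_eq_mul_pow, if_neg (by simpa using ho)]
    simp only [Option.getD_some, Option.map_some]
    obtain ⟨b, hb⟩ := ho
    have hb2 : a / 2 = b := by omega
    rw [hb2]
    have key : (s i' * c ^ b)⁻¹ * s i * (s i' * c ^ b)
        = (c ^ b)⁻¹ * ((s i' * s i * s i') * c ^ b) := by
      rw [mul_inv_rev, cs.inv_simple]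
      group
    rw [key]
    have h2 : s i' * s i * s i' = c⁻¹ * s i' := by
      rw [hc, mul_inv_rev, cs.inv_simple, cs.inv_simple]
    rw [h2, mul_assoc c⁻¹, simple_mul_pow, ← hc, ← mul_assoc, ← mul_assoc,
      ← mul_inv_rev, ← mul_inv_rev, ← pow_succ', ← pow_add]
    have : b + (b + 1) = a := by omega
    rw [this, hfin]

theorem ris_alt_eq (i i' : B) :
    cs.rightInvSeq (alternatingWord i i' (M i i' * 2))
      = (List.range (M i i' * 2)).map (fun j => (s i * s i') ^ (j + 1) * s i') := by
  apply List.ext_getElem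
  · simp [cs.length_rightInvSeq, length_alternatingWord]
  · intro j h1 h2
    have hj : j < M i i' * 2 := by simpa [length_alternatingWord] using h1
    have := ris_alt_getD cs i i' hj
    rw [List.getD_eq_getElem _ _ h1] at this
    rw [this]
    simp

theorem ris_alt_halves (i i' : B) :
    ∃ l : List W, cs.rightInvSeq (alternatingWord i i' (M i i' * 2)) = l ++ l := by
  refine ⟨(List.range (M i i')).map (fun j => (s i * s i') ^ (j + 1) * s i'), ?_⟩
  rw [ris_alt_eq]
  have h2 : M i i' * 2 = M i i' + M i i' := by omega
  rw [h2, List.range_add, List.map_append]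
  congr 1
  rw [List.map_map]
  apply List.map_congr_left
  intro j hj
  simp only [Function.comp_apply]
  have : M i i' + j + 1 = M i i' + (j + 1) := by omega
  rw [this, pow_add, cs.simple_mul_simple_pow, one_mul]

theorem F_alt_pow (i i' : B) (k : ℕ) :
    F cs (alternatingWord i i' (2 * k)) = (eta cs i * eta cs i') ^ k := by
  induction k with
  | zero => simp [alternatingWord]
  | succ k ih =>
    have h1 : 2 * (k + 1) = (2 * k + 1) + 1 := by omega
    rw [h1, alternatingWord_succ', alternatingWord_succ']
    have he1 : ¬ Even (2 * k + 1) := by simp [Nat.even_add_one]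
    have he2 : Even (2 * k) := ⟨k, by omega⟩
    rw [if_neg he1, if_pos he2, F_cons, F_cons, ih, pow_succ', ← mul_assoc]

theorem eta_liftable : CoxeterMatrix.IsLiftable M (eta cs) := by
  intro i i'
  have h2 : 2 * M i i' = M i i' * 2 := by omega
  rw [← F_alt_pow cs i i', h2]
  funext p
  obtain ⟨t, ε⟩ := p
  rw [F_apply]
  have hπ : π (alternatingWord i i' (M i i' * 2)) = 1 := by
    rw [cs.prod_alternatingWord_eq_mul_pow, if_pos ⟨M i i', by omega⟩]
    have : M i i' * 2 / 2 = M i i' := by omega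
    rw [this, one_mul, cs.simple_mul_simple_pow]
  obtain ⟨l, hl⟩ := ris_alt_halves cs i i'
  rw [hπ, hl]
  show (1 * t * 1⁻¹, _ * ε) = (t, ε)
  rw [List.count_append]
  refine Prod.ext (by simp) ?_
  show (-1 : ℤˣ) ^ (l.count t + l.count t) * ε = ε
  rw [pow_add, Int.units_mul_self, one_mul]

/-- The sign representation as a monoid hom. -/
noncomputable def rho : W →* Function.End (W × ℤˣ) :=
  cs.lift ⟨eta cs, eta_liftable cs⟩

theorem rho_wordProd (ω : List B) : rho cs (π ω) = F cs ω := by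
  induction ω with
  | nil => simp [map_one]
  | cons i ω ih =>
    rw [cs.wordProd_cons, map_mul, ih, F_cons, rho, cs.lift_apply_simple]

theorem sign_invariance {ω ω' : List B} (h : π ω = π ω') (t : W) :
    ((-1 : ℤˣ)) ^ ((ris ω).count t) = (-1) ^ ((ris ω').count t) := by
  have hF : F cs ω = F cs ω' := by rw [← rho_wordProd, ← rho_wordProd, h]
  have happ := congrFun hF (t, 1)
  rw [F_apply, F_apply] at happ
  have := congrArg Prod.snd happ
  simpa using this

theorem ris_append (ω ω' : List B) :
    ris (ω ++ ω') = (ris ω).map (fun t => (π ω')⁻¹ * t * π ω') ++ ris ω' := by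
  induction ω with
  | nil => simp
  | cons i ω ih =>
    rw [List.cons_append, ris_cons, ris_cons, List.map_cons, List.cons_append, ih]
    congr 1
    rw [cs.wordProd_append, mul_inv_rev]
    group

theorem count_conj_map (l : List W) (g t : W) :
    (l.map (fun x => g⁻¹ * x * g)).count t = l.count (g * t * g⁻¹) := by
  have hinj : Function.Injective (fun x : W => g⁻¹ * x * g) := by
    intro x y h
    simp only at h
    have h1 := mul_right_cancel h
    exact mul_left_cancel h1
  have h2 := List.count_map_of_injective l _ hinj (g * t * g⁻¹)
  have h3 : g⁻¹ * (g * t * g⁻¹) * g = t := by group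
  rw [h3] at h2
  exact h2

theorem count_eq_of_pointwise : ∀ {l₁ l₂ : List W} {t₁ t₂ : W}, l₁.length = l₂.length →
    (∀ j, j < l₁.length → (l₁.getD j 1 = t₁ ↔ l₂.getD j 1 = t₂)) →
    l₁.count t₁ = l₂.count t₂ := by
  intro l₁
  induction l₁ with
  | nil =>
    intro l₂ t₁ t₂ hlen _
    rw [List.length_nil] at hlen
    rw [(List.length_eq_zero_iff.mp hlen.symm)]
    simp
  | cons a l₁ ih =>
    intro l₂ t₁ t₂ hlen h
    match l₂ with
    | [] => simp at hlen
    | b :: l₂ =>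
      have h0 := h 0 (by simp)
      simp only [List.getD_cons_zero] at h0
      have htail := ih (l₂ := l₂) (t₁ := t₁) (t₂ := t₂) (by simpa using hlen) ?_
      · rw [List.count_cons, List.count_cons, htail]
        congr 1
        by_cases hab : a = t₁
        · rw [if_pos (by simpa using hab), if_pos (by simp [h0.mp hab])]
        · rw [if_neg (by simpa using hab), if_neg (by simp; intro hc; exact hab (h0.mpr hc))]
      · intro j hj
        have := h (j + 1) (by simpa using Nat.succ_lt_succ hj)
        simpa using this

theorem count_ris_lis (α : List B) (i : B) :
    (ris α).count (s i) = (lis α).count ((π α) * s i * (π α)⁻¹) := by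
  apply count_eq_of_pointwise (by simp)
  intro j hj
  have hjl : j < α.length := by simpa using hj
  rw [cs.getD_rightInvSeq, cs.getD_leftInvSeq,
    List.getElem?_eq_getElem hjl]
  simp only [Option.map_some, Option.getD_some]
  set P := π (α.take j) with hP
  set Q := π (α.drop (j + 1)) with hQ
  set a := s (α[j]) with ha2
  have hw : π α = P * a * Q := by
    conv_lhs => rw [← List.take_append_drop j α]
    rw [cs.wordProd_append, List.drop_eq_getElem_cons hjl, cs.wordProd_cons, ← mul_assoc]
  constructor
  · intro h
    rw [hw, ← h]
    group
  · intro h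
    have h2 : s i = (π α)⁻¹ * (P * a * P⁻¹) * (π α) := by
      rw [h]; group
    rw [h2, hw]
    group

theorem sign_refl {t : W} (ht : cs.IsReflection t) {γ : List B} (hγ : π γ = t) :
    ((-1 : ℤˣ)) ^ ((ris γ).count t) = -1 := by
  obtain ⟨w, i, hti⟩ := ht
  obtain ⟨α, hα⟩ := cs.wordProd_surjective w
  set γ₀ : List B := α ++ i :: α.reverse with hγ₀def
  have hγ₀ : π γ₀ = w * s i * w⁻¹ := by
    rw [hγ₀def, cs.wordProd_append, cs.wordProd_cons, cs.wordProd_reverse, hα, mul_assoc]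
  rw [sign_invariance cs (show π γ = π γ₀ by rw [hγ, hγ₀, hti]) t]
  rw [hγ₀def, ris_append, List.count_append, count_conj_map]
  have hβ : π (i :: α.reverse) = s i * w⁻¹ := by
    rw [cs.wordProd_cons, cs.wordProd_reverse, hα]
  rw [hβ, hti]
  have hconj : s i * w⁻¹ * (w * s i * w⁻¹) * (s i * w⁻¹)⁻¹ = s i := by
    rw [mul_inv_rev, cs.inv_simple, inv_inv]
    simp [mul_assoc, cs.simple_mul_simple_cancel_left]
  rw [hconj]
  have hris : ris (i :: α.reverse) = (w * s i * w⁻¹) :: ris (α.reverse) := by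
    rw [ris_cons, cs.wordProd_reverse, hα, inv_inv]
  rw [hris, List.count_cons_self, cs.rightInvSeq_reverse, List.count_reverse]
  have hE := count_ris_lis cs α i
  rw [hα] at hE
  rw [← hE]
  set k := (ris α).count (s i) with hk
  have harith : k + (k + 1) = (k + k) + 1 := by omega
  rw [harith, pow_succ, pow_add, Int.units_mul_self, one_mul]

theorem mem_ris_of_isRightInversion {ω : List B} {t w : W} (ht : cs.IsReflection t)
    (hω : π ω = w) (hl : ℓ (w * t) < ℓ w) : t ∈ ris ω := by
  obtain ⟨ωv, hred, hv⟩ := cs.exists_reduced_word' (w * t)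
  have htt := ht
  obtain ⟨u, i, hti⟩ := htt
  obtain ⟨α, hα⟩ := cs.wordProd_surjective u
  set γ : List B := α ++ i :: α.reverse with hγdef
  have hγ : π γ = t := by
    rw [hγdef, cs.wordProd_append, cs.wordProd_cons, cs.wordProd_reverse, hα, hti, mul_assoc]
  have hΓ : π (ωv ++ γ) = w := by
    rw [cs.wordProd_append, ← hv, hγ, mul_assoc, ht.mul_self, mul_one]
  have hsign := sign_invariance cs (hω.trans hΓ.symm) t
  rw [ris_append, List.count_append, count_conj_map, hγ] at hsign
  have hconj : t * t * t⁻¹ = t := by group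
  rw [hconj] at hsign
  have hc0 : (ris ωv).count t = 0 := by
    rw [List.count_eq_zero]
    intro hmem
    have hinv := (cs.isRightInversion_of_mem_rightInvSeq hred hmem).2
    rw [← hv, mul_assoc, ht.mul_self, mul_one] at hinv
    omega
  rw [hc0, Nat.zero_add, sign_refl cs ht hγ] at hsign
  by_contra hnot
  rw [List.count_eq_zero_of_not_mem hnot, pow_zero] at hsign
  exact absurd hsign (by decide)

theorem exchange_right {ω : List B} {t w : W} (ht : cs.IsReflection t)
    (hω : π ω = w) (hl : ℓ (w * t) < ℓ w) :
    ∃ j < ω.length, π (ω.eraseIdx j) = w * t := by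
  have hmem := mem_ris_of_isRightInversion cs ht hω hl
  obtain ⟨j, hj, hjt⟩ := List.mem_iff_getElem.mp hmem
  refine ⟨j, by simpa using hj, ?_⟩
  rw [← cs.wordProd_mul_getD_rightInvSeq, List.getD_eq_getElem _ _ hj, hjt, hω]

theorem exchange_left {ω : List B} {t w : W} (ht : cs.IsReflection t)
    (hω : π ω = w) (hl : ℓ (t * w) < ℓ w) :
    ∃ j < ω.length, π (ω.eraseIdx j) = t * w := by
  have hmem : t ∈ lis ω := by
    have h1 : t ∈ ris (ω.reverse) := by
      apply mem_ris_of_isRightInversion cs ht (w := w⁻¹) (by rw [cs.wordProd_reverse, hω])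
      rw [show w⁻¹ * t = (t⁻¹ * w)⁻¹ by group, ht.inv, cs.length_inv, cs.length_inv]
      exact hl
    rw [cs.rightInvSeq_reverse] at h1
    exact List.mem_reverse.mp h1
  obtain ⟨j, hj, hjt⟩ := List.mem_iff_getElem.mp hmem
  refine ⟨j, by simpa using hj, ?_⟩
  rw [← cs.getD_leftInvSeq_mul_wordProd, List.getD_eq_getElem _ _ hj, hjt, hω]

/-- One step of the Bruhat order: `a` is obtained from `b` by right-multiplying by a
reflection, decreasing the length. -/
def bstep (a b : W) : Prop := ∃ t, cs.IsReflection t ∧ a = b * t ∧ ℓ a < ℓ b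

/-- The Bruhat order, defined via chains of reflections. -/
def cle (x w : W) : Prop := Relation.ReflTransGen (bstep cs) x w

theorem cle_refl (w : W) : cle cs w w := Relation.ReflTransGen.refl

theorem cle_trans {x y z : W} (h1 : cle cs x y) (h2 : cle cs y z) : cle cs x z :=
  Relation.ReflTransGen.trans h1 h2

theorem bstep_cle {x w : W} (h : bstep cs x w) : cle cs x w :=
  Relation.ReflTransGen.single h

theorem cle_mul_simple_left {w : W} {i : B} (h : ℓ w < ℓ (s i * w)) :
    cle cs w (s i * w) := by
  apply bstep_cle
  refine ⟨w⁻¹ * s i * w, ⟨w⁻¹, i, by rw [inv_inv]⟩, ?_, h⟩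
  simp [mul_assoc, cs.simple_mul_simple_cancel_left]

theorem simple_mul_cle {w : W} {i : B} (h : ℓ (s i * w) < ℓ w) :
    cle cs (s i * w) w := by
  apply bstep_cle
  refine ⟨w⁻¹ * s i * w, ⟨w⁻¹, i, by rw [inv_inv]⟩, ?_, h⟩
  simp [mul_assoc]

/-- Deletion property: every word contains a reduced sublist with the same product. -/
theorem exists_reduced_sublist (γ : List B) :
    ∃ δ : List B, δ.Sublist γ ∧ cs.IsReduced δ ∧ π δ = π γ := by
  induction γ with
  | nil => exact ⟨[], List.Sublist.refl _, by simp [CoxeterSystem.IsReduced], rfl⟩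
  | cons i γ ih =>
    obtain ⟨δ, hsub, hred, hπ⟩ := ih
    rcases cs.length_simple_mul (π γ) i with hup | hdown
    · refine ⟨i :: δ, hsub.cons₂ i, ?_, by rw [cs.wordProd_cons, cs.wordProd_cons, hπ]⟩
      show ℓ (π (i :: δ)) = (i :: δ).length
      rw [cs.wordProd_cons, hπ, hup, List.length_cons]
      rw [CoxeterSystem.IsReduced] at hred
      rw [← hred, hπ]
    · have hlt : ℓ (s i * π δ) < ℓ (π δ) := by rw [hπ]; omega
      obtain ⟨j, hj, hje⟩ := exchange_left cs (cs.isReflection_simple i) rfl hlt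
      refine ⟨δ.eraseIdx j, (List.eraseIdx_sublist δ j).trans (hsub.trans (List.sublist_cons_self i γ)), ?_, ?_⟩
      · show ℓ (π (δ.eraseIdx j)) = (δ.eraseIdx j).length
        rw [hje, hπ]
        have hlen : (δ.eraseIdx j).length = δ.length - 1 := by
          rw [List.length_eraseIdx]
          simp [hj]
        have hred' : ℓ (π γ) = δ.length := by
          rw [CoxeterSystem.IsReduced] at hred
          rw [← hπ, hred]
        omega
      · rw [hje, hπ, cs.wordProd_cons]

theorem cle_subword_aux : ∀ n : ℕ, ∀ u w : W, ℓ w ≤ n → cle cs u w →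
    ∀ ω : List B, cs.IsReduced ω → π ω = w → ∃ σ, σ.Sublist ω ∧ π σ = u := by
  intro n
  induction n using Nat.strong_induction_on with
  | _ n IH =>
    intro u w hw h ω hred hπ
    rcases Relation.ReflTransGen.cases_tail h with heq | ⟨c, huc, hcw⟩
    · exact ⟨ω, List.Sublist.refl _, by rw [hπ, heq]⟩
    · obtain ⟨t, ht, hct, hlt⟩ := hcw
      obtain ⟨j, hj, hje⟩ := exchange_right cs ht hπ (by rw [← hct]; exact hlt)
      obtain ⟨δ, hδsub, hδred, hδπ⟩ := exists_reduced_sublist cs (ω.eraseIdx j)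
      have hδc : π δ = c := by rw [hδπ, hje, ← hct]
      obtain ⟨σ, hσsub, hσπ⟩ := IH (ℓ c) (by omega) u c le_rfl huc δ hδred hδc
      exact ⟨σ, (hσsub.trans hδsub).trans (List.eraseIdx_sublist ω j), hσπ⟩

theorem lift_lemma : ∀ n : ℕ, ∀ w : W, ℓ w ≤ n → ∀ (i : B) (x : W), cle cs x w →
    ℓ x < ℓ (s i * x) →
    ((ℓ w < ℓ (s i * w)) → cle cs (s i * x) (s i * w)) ∧
    ((ℓ (s i * w) < ℓ w) → cle cs (s i * x) w) := by
  intro n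
  induction n using Nat.strong_induction_on with
  | _ n IH =>
    intro w hw i x hxw hx
    constructor
    · intro hup
      rcases Relation.ReflTransGen.cases_tail hxw with heq | ⟨c, hxc, hcw⟩
      · rw [← heq]
        exact cle_refl cs _
      · obtain ⟨t, ht, hct, hlt⟩ := hcw
        rcases cs.length_simple_mul c i with hcu | hcd
        · have h1 : cle cs (s i * x) (s i * c) :=
            (IH (ℓ c) (by omega) c le_rfl i x hxc hx).1 (by omega)
          have h2 : cle cs (s i * c) (s i * w) :=
            bstep_cle cs ⟨t, ht, by rw [hct, mul_assoc], by omega⟩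
          exact cle_trans cs h1 h2
        · have h3 : cle cs (s i * x) c :=
            (IH (ℓ c) (by omega) c le_rfl i x hxc hx).2 (by omega)
          have h4 : cle cs c w := bstep_cle cs ⟨t, ht, hct, hlt⟩
          exact cle_trans cs h3 (cle_trans cs h4 (cle_mul_simple_left cs hup))
    · intro hdown
      rcases Relation.ReflTransGen.cases_tail hxw with heq | ⟨c, hxc, hcw⟩
      · exfalso
        rw [← heq] at hx
        omega
      · obtain ⟨t, ht, hct, hlt⟩ := hcw
        rcases cs.length_simple_mul c i with hcu | hcd
        swap
        · have h3 : cle cs (s i * x) c :=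
            (IH (ℓ c) (by omega) c le_rfl i x hxc hx).2 (by omega)
          exact cle_trans cs h3 (bstep_cle cs ⟨t, ht, hct, hlt⟩)
        · have h1 : cle cs (s i * x) (s i * c) :=
            (IH (ℓ c) (by omega) c le_rfl i x hxc hx).1 (by omega)
          by_cases h2 : ℓ (s i * c) < ℓ (s i * w)
          · have h6 : cle cs (s i * c) (s i * w) :=
              bstep_cle cs ⟨t, ht, by rw [hct, mul_assoc], h2⟩
            exact cle_trans cs h1 (cle_trans cs h6 (simple_mul_cle cs hdown))
          · obtain ⟨τ, hτred, hτπ⟩ := cs.exists_reduced_word' (s i * w)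
            have hτlen : τ.length = ℓ (s i * w) := by
              rw [CoxeterSystem.IsReduced] at hτred
              rw [← hτred, ← hτπ]
            have hωπ : π (i :: τ) = w := by
              rw [cs.wordProd_cons, ← hτπ, cs.simple_mul_simple_cancel_left]
            have hωred : cs.IsReduced (i :: τ) := by
              show ℓ (π (i :: τ)) = (i :: τ).length
              rw [hωπ, List.length_cons, hτlen]
              rcases cs.length_simple_mul w i with hh | hh <;> omega
            obtain ⟨j, hj, hje⟩ := exchange_right cs ht hωπ (by rw [← hct]; exact hlt)
            match j, hj, hje with
            | 0, hj, hje =>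
              have hc2 : c = s i * w := by
                rw [← hct] at hje
                have hτc : π τ = c := by
                  rw [← hje, List.eraseIdx_cons_zero]
                rw [hτπ, hτc]
              rw [hc2, cs.simple_mul_simple_cancel_left] at h1
              exact h1
            | (j + 1), hj, hje =>
              exfalso
              have herase : (i :: τ).eraseIdx (j + 1) = i :: τ.eraseIdx j := rfl
              rw [herase, cs.wordProd_cons, ← hct] at hje
              have hπe : π (τ.eraseIdx j) = s i * c := by
                rw [← hje, cs.simple_mul_simple_cancel_left]
              have hjτ : j < τ.length := by simpa using hj
              have hlene : (τ.eraseIdx j).length = τ.length - 1 := by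
                rw [List.length_eraseIdx]
                simp [hjτ]
              have := cs.length_wordProd_le (τ.eraseIdx j)
              rw [hπe, hlene, hτlen] at this
              omega

theorem isReduced_of_cons {i : B} {ω : List B} (h : cs.IsReduced (i :: ω)) :
    cs.IsReduced ω ∧ ℓ (π ω) < ℓ (s i * π ω) := by
  rw [CoxeterSystem.IsReduced] at h ⊢
  rw [cs.wordProd_cons, List.length_cons] at h
  have hle := cs.length_wordProd_le ω
  rcases cs.length_simple_mul (π ω) i with h1 | h1 <;> constructor <;> omega

theorem subword_cle_reduced : ∀ ω : List B, cs.IsReduced ω → ∀ σ : List B, σ.Sublist ω →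
    cs.IsReduced σ → cle cs (π σ) (π ω) := by
  intro ω
  induction ω with
  | nil =>
    intro _ σ hσ _
    rw [List.sublist_nil.mp hσ]
    exact cle_refl cs _
  | cons i ω' ih =>
    intro hred σ hσ hσred
    obtain ⟨hω'red, hup⟩ := isReduced_of_cons cs hred
    rcases List.sublist_cons_iff.mp hσ with hcase | ⟨σ', rfl, hσ'⟩
    · refine cle_trans cs (ih hω'red σ hcase hσred) ?_
      rw [cs.wordProd_cons]
      exact cle_mul_simple_left cs hup
    · obtain ⟨hσ'red, hx⟩ := isReduced_of_cons cs hσred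
      have h := ih hω'red σ' hσ' hσ'red
      have h2 := (lift_lemma cs (ℓ (π ω')) (π ω') le_rfl i (π σ') h hx).1 hup
      rw [cs.wordProd_cons, cs.wordProd_cons]
      exact h2

theorem subword_cle {ω : List B} (hred : cs.IsReduced ω) {σ : List B} (hσ : σ.Sublist ω) :
    cle cs (π σ) (π ω) := by
  obtain ⟨δ, h1, h2, h3⟩ := exists_reduced_sublist cs σ
  rw [← h3]
  exact subword_cle_reduced cs ω hred δ (h1.trans hσ) h2

theorem bruhatLE_iff_cle {u w : W} : cs.BruhatLE u w ↔ cle cs u w := by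
  constructor
  · rintro ⟨ω, hred, hω, σ, hσ, hu⟩
    rw [← hu, ← hω]
    exact subword_cle cs hred hσ
  · intro h
    obtain ⟨ω, hred, hω⟩ := cs.exists_reduced_word' w
    obtain ⟨σ, hσ, hu⟩ := cle_subword_aux cs (ℓ w) u w le_rfl h ω hred hω.symm
    exact ⟨ω, hred, hω.symm, σ, hσ, hu⟩

/-- The subword property for an arbitrary reduced word. -/
theorem bruhatLE_subword {u w : W} (h : cs.BruhatLE u w) {ω : List B}
    (hred : cs.IsReduced ω) (hω : π ω = w) : ∃ σ, σ.Sublist ω ∧ π σ = u :=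
  cle_subword_aux cs (ℓ w) u w le_rfl ((bruhatLE_iff_cle cs).mp h) ω hred hω

theorem bruhatLE_refl (w : W) : cs.BruhatLE w w := by
  obtain ⟨ω, hred, hω⟩ := cs.exists_reduced_word' w
  exact ⟨ω, hred, hω.symm, ω, List.Sublist.refl _, hω.symm⟩

theorem bruhatLE_length {u w : W} (h : cs.BruhatLE u w) : ℓ u ≤ ℓ w := by
  obtain ⟨ω, hred, hω, σ, hσ, hu⟩ := h
  rw [CoxeterSystem.IsReduced] at hred
  calc ℓ u = ℓ (π σ) := by rw [hu]
    _ ≤ σ.length := cs.length_wordProd_le σ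
    _ ≤ ω.length := hσ.length_le
    _ = ℓ w := by rw [← hred, hω]

theorem bruhatLE_antisymm {u w : W} (h1 : cs.BruhatLE u w) (h2 : cs.BruhatLE w u) : u = w := by
  have hl1 := bruhatLE_length cs h1
  have hl2 := bruhatLE_length cs h2
  have hl : ℓ u = ℓ w := le_antisymm hl1 hl2
  obtain ⟨ω, hred, hω, σ, hσ, hu⟩ := h1
  rw [CoxeterSystem.IsReduced] at hred
  have hlen : σ.length = ω.length := by
    have hσle := cs.length_wordProd_le σ
    have : σ.length ≤ ω.length := hσ.length_le
    rw [hu] at hσle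
    have hωl : ω.length = ℓ w := by rw [← hω, hred]
    omega
  rw [← hu, hσ.eq_of_length hlen, hω]

theorem le_up {z w : W} {i : B} (h : cs.BruhatLE z w) (hl : ℓ w < ℓ (s i * w)) :
    cs.BruhatLE z (s i * w) := by
  obtain ⟨ω, hred, hω, σ, hσ, hz⟩ := h
  refine ⟨i :: ω, ?_, by rw [cs.wordProd_cons, hω], σ, hσ.trans (List.sublist_cons_self i ω), hz⟩
  show ℓ (π (i :: ω)) = (i :: ω).length
  rw [CoxeterSystem.IsReduced] at hred
  rw [cs.wordProd_cons, hω, List.length_cons, ← hred, hω]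
  rcases cs.length_simple_mul w i with hh | hh <;> omega

theorem le_up' {z w : W} {i : B} (h : cs.BruhatLE z w) (hl : ℓ w < ℓ (s i * w)) :
    cs.BruhatLE (s i * z) (s i * w) := by
  obtain ⟨ω, hred, hω, σ, hσ, hz⟩ := h
  refine ⟨i :: ω, ?_, by rw [cs.wordProd_cons, hω], i :: σ, hσ.cons₂ i,
    by rw [cs.wordProd_cons, hz]⟩
  show ℓ (π (i :: ω)) = (i :: ω).length
  rw [CoxeterSystem.IsReduced] at hred
  rw [cs.wordProd_cons, hω, List.length_cons, ← hred, hω]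
  rcases cs.length_simple_mul w i with hh | hh <;> omega

theorem le_down {z w : W} {i : B} (h : cs.BruhatLE z w) (hl : ℓ (s i * w) < ℓ w) :
    cs.BruhatLE (s i * z) w := by
  obtain ⟨τ, hτred, hτπ⟩ := cs.exists_reduced_word' (s i * w)
  have hτlen : τ.length = ℓ (s i * w) := by
    rw [CoxeterSystem.IsReduced] at hτred
    rw [← hτred, ← hτπ]
  have hωπ : π (i :: τ) = w := by
    rw [cs.wordProd_cons, ← hτπ, cs.simple_mul_simple_cancel_left]
  have hωred : cs.IsReduced (i :: τ) := by
    show ℓ (π (i :: τ)) = (i :: τ).length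
    rw [hωπ, List.length_cons, hτlen]
    rcases cs.length_simple_mul w i with hh | hh <;> omega
  obtain ⟨σ, hσ, hz⟩ := bruhatLE_subword cs h hωred hωπ
  rcases List.sublist_cons_iff.mp hσ with hcase | ⟨σ', rfl, hσ'⟩
  · exact ⟨i :: τ, hωred, hωπ, i :: σ, hcase.cons₂ i, by rw [cs.wordProd_cons, hz]⟩
  · refine ⟨i :: τ, hωred, hωπ, σ', hσ'.trans (List.sublist_cons_self i τ), ?_⟩
    rw [cs.wordProd_cons] at hz
    rw [← hz, cs.simple_mul_simple_cancel_left]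

/-- The Demazure product of a word. -/
noncomputable def dem : List B → W
  | [] => 1
  | i :: ω => if ℓ (dem ω) < ℓ (s i * dem ω) then s i * dem ω else dem ω

theorem dem_max : ∀ ω σ : List B, σ.Sublist ω → cs.BruhatLE (π σ) (dem cs ω) := by
  intro ω
  induction ω with
  | nil =>
    intro σ hσ
    rw [List.sublist_nil.mp hσ]
    exact bruhatLE_refl cs 1
  | cons i ω' ih =>
    intro σ hσ
    rcases List.sublist_cons_iff.mp hσ with hcase | ⟨σ', rfl, hσ'⟩
    · have h := ih σ hcase
      rw [dem]
      split_ifs with hif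
      · exact le_up cs h hif
      · exact h
    · have h := ih σ' hσ'
      rw [dem, cs.wordProd_cons]
      split_ifs with hif
      · exact le_up' cs h hif
      · have hdown : ℓ (s i * dem cs ω') < ℓ (dem cs ω') := by
          rcases cs.length_simple_mul (dem cs ω') i with hh | hh <;> omega
        exact le_down cs h hdown

theorem dem_mem : ∀ ω : List B, ∃ σ : List B, σ.Sublist ω ∧ cs.IsReduced σ ∧ π σ = dem cs ω := by
  intro ω
  induction ω with
  | nil => exact ⟨[], List.Sublist.refl _, by simp [CoxeterSystem.IsReduced], rfl⟩
  | cons i ω' ih =>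
    obtain ⟨σ, hσ, hσred, hσπ⟩ := ih
    rw [dem]
    split_ifs with hif
    · refine ⟨i :: σ, hσ.cons₂ i, ?_, by rw [cs.wordProd_cons, hσπ]⟩
      show ℓ (π (i :: σ)) = (i :: σ).length
      rw [CoxeterSystem.IsReduced] at hσred
      rw [cs.wordProd_cons, hσπ, List.length_cons, ← hσred, hσπ]
      rcases cs.length_simple_mul (dem cs ω') i with hh | hh <;> omega
    · exact ⟨σ, hσ.trans (List.sublist_cons_self i ω'), hσred, hσπ⟩

end BruhatAux

/-- For any `x, y ∈ W`, the set `{u u' : u ≤ x, u' ≤ y}` (Bruhat order)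
has a unique maximal element (the Demazure product `x * y`). -/
theorem stmt1 {B W : Type*} [Group W] {M : CoxeterMatrix B} (cs : CoxeterSystem M W)
    (x y : W) :
    ∃! m : W, (∃ u u' : W, cs.BruhatLE u x ∧ cs.BruhatLE u' y ∧ m = u * u') ∧
      ∀ z : W, (∃ u u' : W, cs.BruhatLE u x ∧ cs.BruhatLE u' y ∧ z = u * u') →
        cs.BruhatLE z m := by
  classical
  obtain ⟨ωx, hxred, hxπ⟩ := cs.exists_reduced_word' x
  obtain ⟨ωy, hyred, hyπ⟩ := cs.exists_reduced_word' y
  set m := BruhatAux.dem cs (ωx ++ ωy) with hm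
  have hmem : ∃ u u' : W, cs.BruhatLE u x ∧ cs.BruhatLE u' y ∧ m = u * u' := by
    obtain ⟨σ, hσ, hσred, hσπ⟩ := BruhatAux.dem_mem cs (ωx ++ ωy)
    obtain ⟨σ₁, σ₂, rfl, h₁, h₂⟩ := List.sublist_append_iff.mp hσ
    refine ⟨cs.wordProd σ₁, cs.wordProd σ₂, ⟨ωx, hxred, hxπ.symm, σ₁, h₁, rfl⟩,
      ⟨ωy, hyred, hyπ.symm, σ₂, h₂, rfl⟩, ?_⟩
    rw [← cs.wordProd_append, hσπ]
  have hmax : ∀ z : W, (∃ u u' : W, cs.BruhatLE u x ∧ cs.BruhatLE u' y ∧ z = u * u') →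
      cs.BruhatLE z m := by
    rintro z ⟨u, u', hu, hu', rfl⟩
    obtain ⟨σ₁, hσ₁, hσ₁π⟩ := BruhatAux.bruhatLE_subword cs hu hxred hxπ.symm
    obtain ⟨σ₂, hσ₂, hσ₂π⟩ := BruhatAux.bruhatLE_subword cs hu' hyred hyπ.symm
    have h := BruhatAux.dem_max cs (ωx ++ ωy) (σ₁ ++ σ₂) (hσ₁.append hσ₂)
    rwa [cs.wordProd_append, hσ₁π, hσ₂π] at h
  refine ⟨m, ⟨hmem, hmax⟩, ?_⟩
  rintro m' ⟨hmem', hmax'⟩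
  exact BruhatAux.bruhatLE_antisymm cs (hmax m' hmem') (hmax' m hmem)
end

section
/- Let $(W,S)$ be a Coxeter group with Demazure product $*$. For any $x, y \in W$, $\mathrm{supp}(x*y) = \mathrm{supp}(x) \cup \mathrm{supp}(y)$, where $\mathrm{supp}(w)$ is the set of simple reflections appearing in some (equivalently, any) reduced expression of $w$. -/
/-- `m` is the Demazure product of `x` and `y`: the unique Bruhat-maximal element of
`{u u' : u ≤ x, u' ≤ y}`. -/
def CoxeterSystem.IsDemazureProd {B W : Type*} [Group W] {M : CoxeterMatrix B}
    (cs : CoxeterSystem M W) (x y m : W) : Prop :=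
  (∃ u u' : W, cs.BruhatLE u x ∧ cs.BruhatLE u' y ∧ m = u * u') ∧
    ∀ z : W, (∃ u u' : W, cs.BruhatLE u x ∧ cs.BruhatLE u' y ∧ z = u * u') →
      cs.BruhatLE z m

/-- The support of `w`: the set of simple reflections appearing in some (equivalently, any)
reduced expression of `w`. -/
def CoxeterSystem.supp {B W : Type*} [Group W] {M : CoxeterMatrix B}
    (cs : CoxeterSystem M W) (w : W) : Set B :=
  {i : B | ∃ ω : List B, cs.IsReduced ω ∧ cs.wordProd ω = w ∧ i ∈ ω}


namespace CoxAux

open CoxeterSystem List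

variable {B W : Type*} [Group W] [DecidableEq W] {M : CoxeterMatrix B}
  (cs : CoxeterSystem M W)

local prefix:100 "σ" => cs.simple
local prefix:100 "π" => cs.wordProd

def titsFun (i : B) : W × Bool → W × Bool :=
  fun p => (σ i * p.1 * σ i, if p.1 = σ i then !p.2 else p.2)

lemma titsFun_involutive (i : B) : Function.Involutive (titsFun cs i) := by
  rintro ⟨w, b⟩
  simp only [titsFun]
  have h1 : σ i * (σ i * w * σ i) * σ i = w := by
    simp [← mul_assoc, cs.simple_mul_simple_self]
  have h2 : (σ i * w * σ i = σ i) ↔ (w = σ i) := by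
    constructor
    · intro h
      have := congrArg (fun z => σ i * z * σ i) h
      simpa [← mul_assoc, cs.simple_mul_simple_self, h1] using this
    · rintro rfl
      simp [cs.simple_mul_simple_self]
  rw [Prod.ext_iff]
  refine ⟨h1, ?_⟩
  by_cases hw : w = σ i
  · simp [hw, h2, cs.simple_mul_simple_self]
  · simp [hw, h2]

def tits (i : B) : Equiv.Perm (W × Bool) := (titsFun_involutive cs i).toPerm

lemma tits_apply (i : B) (w : W) (b : Bool) :
    tits cs i (w, b) = (σ i * w * σ i, if w = σ i then !b else b) := rfl

lemma prod_map_tits (ω : List B) (w : W) (b : Bool) :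
    (List.map (tits cs) ω).prod (w, b) =
      (π ω * w * (π ω)⁻¹,
        if Even ((cs.rightInvSeq ω).count w) then b else !b) := by
  induction ω with
  | nil => simp
  | cons i τ ih =>
    rw [List.map_cons, List.prod_cons, Equiv.Perm.mul_apply, ih, tits_apply]
    have hc : (π τ * w * (π τ)⁻¹ = σ i) ↔ ((π τ)⁻¹ * σ i * π τ = w) := by
      constructor
      · intro h; rw [← h]; group
      · intro h; rw [← h]; group
    have hris : cs.rightInvSeq (i :: τ) = ((π τ)⁻¹ * σ i * π τ) :: cs.rightInvSeq τ := rfl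
    have hfst : σ i * (π τ * w * (π τ)⁻¹) * σ i = π (i :: τ) * w * (π (i :: τ))⁻¹ := by
      rw [cs.wordProd_cons, mul_inv_rev, cs.inv_simple]
      group
    rw [Prod.ext_iff]
    refine ⟨hfst, ?_⟩
    simp only [hris, List.count_cons]
    by_cases hx : (π τ)⁻¹ * σ i * π τ = w
    · have : (π τ * w * (π τ)⁻¹ = σ i) := hc.mpr hx
      simp only [this, if_pos, hx, if_true]
      rcases Nat.even_or_odd ((cs.rightInvSeq τ).count w) with he | ho
      · simp [he, Nat.even_add_one, Nat.not_even_iff_odd, Even.add_one he]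
      · simp [Nat.not_even_iff_odd.mpr ho, Nat.even_add_one, Nat.not_odd_iff_even.mp, ho.add_one]
    · have : ¬(π τ * w * (π τ)⁻¹ = σ i) := fun h => hx (hc.mp h)
      simp [this, hx]

end CoxAux

namespace CoxAux
open CoxeterSystem List

variable {B W : Type*} [Group W] [DecidableEq W] {M : CoxeterMatrix B}
  (cs : CoxeterSystem M W)

local prefix:100 "σ" => cs.simple
local prefix:100 "π" => cs.wordProd

lemma alt_drop (i j : B) : ∀ (n d : ℕ),
    (alternatingWord i j n).drop d = alternatingWord i j (n - d) := by
  intro n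
  induction n with
  | zero => intro d; simp [alternatingWord]
  | succ n ih =>
    intro d
    cases d with
    | zero => simp
    | succ d =>
      rw [alternatingWord_succ' i j n, List.drop_succ_cons, ih d]
      congr 1
      omega

lemma alt_append (i j : B) (m : ℕ) : ∀ (e : ℕ),
    alternatingWord i j (m + e) =
      (if Even e then alternatingWord i j m else alternatingWord j i m)
        ++ alternatingWord i j e := by
  induction m with
  | zero =>
    intro e
    rw [Nat.zero_add]
    split <;> simp [alternatingWord]
  | succ m ih =>
    intro e
    have h1 : m + 1 + e = (m + e) + 1 := by omega
    rw [h1, alternatingWord_succ' i j (m + e), ih e]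
    rcases Nat.even_or_odd m with hm | hm <;> rcases Nat.even_or_odd e with he | he
    · rw [if_pos he, if_pos he, if_pos (hm.add he), alternatingWord_succ' i j m,
        if_pos hm, List.cons_append]
    · rw [if_neg (Nat.not_even_iff_odd.mpr he), if_neg (Nat.not_even_iff_odd.mpr he),
        if_neg (Nat.not_even_iff_odd.mpr (hm.add_odd he)), alternatingWord_succ' j i m,
        if_pos hm, List.cons_append]
    · rw [if_pos he, if_pos he, if_neg (Nat.not_even_iff_odd.mpr (hm.add_even he)),
        alternatingWord_succ' i j m, if_neg (Nat.not_even_iff_odd.mpr hm), List.cons_append]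
    · rw [if_neg (Nat.not_even_iff_odd.mpr he), if_neg (Nat.not_even_iff_odd.mpr he),
        if_pos (hm.add_odd he), alternatingWord_succ' j i m,
        if_neg (Nat.not_even_iff_odd.mpr hm), List.cons_append]

lemma wp_shift (i j : B) (e : ℕ) :
    π (alternatingWord i j (M i j + e)) =
      π (CoxeterSystem.braidWord M i j) * π (alternatingWord i j e) := by
  rw [alt_append i j (M i j) e, cs.wordProd_append]
  congr 1
  split
  · rfl
  · have h : M i j = M j i := M.symmetric i j
    rw [h]
    exact cs.wordProd_braidWord_eq j i

lemma ris_alt_getD (i j : B) (n k : ℕ) (hk : k < n) :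
    (cs.rightInvSeq (alternatingWord i j n)).getD k 1
      = (π (alternatingWord i j (n - (k + 1))))⁻¹ * π (alternatingWord i j (n - k)) := by
  have hsucc : n - k = (n - (k + 1)) + 1 := by omega
  have halt : alternatingWord i j (n - k)
      = (if Even (n - (k + 1)) then j else i) :: alternatingWord i j (n - (k + 1)) := by
    rw [hsucc, alternatingWord_succ']
  have hget : (alternatingWord i j n)[k]? = some (if Even (n - (k + 1)) then j else i) := by
    have hd := alt_drop i j n k
    have h0 : (alternatingWord i j n)[k]? = ((alternatingWord i j n).drop k)[0]? := by
      rw [List.getElem?_drop, Nat.add_zero]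
    rw [h0, hd, halt]
    simp
  rw [cs.getD_rightInvSeq, alt_drop, hget]
  simp only [Option.map_some, Option.getD_some]
  rw [halt, cs.wordProd_cons, mul_assoc]

lemma ris_alt_half (i j : B) (k : ℕ) (hk : k < M i j) :
    (cs.rightInvSeq (alternatingWord i j (2 * M i j))).getD (M i j + k) 1
      = (cs.rightInvSeq (alternatingWord i j (2 * M i j))).getD k 1 := by
  set m := M i j with hm
  rw [ris_alt_getD cs i j _ k (by omega), ris_alt_getD cs i j _ (m + k) (by omega)]
  have e1 : 2 * m - (k + 1) = m + (m - (k + 1)) := by omega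
  have e2 : 2 * m - k = m + (m - k) := by omega
  have e3 : 2 * m - (m + k + 1) = m - (k + 1) := by omega
  have e4 : 2 * m - (m + k) = m - k := by omega
  rw [e1, e2, e3, e4, wp_shift, wp_shift, mul_inv_rev, mul_assoc, inv_mul_cancel_left]

lemma even_count_ris_alt (i j : B) (w : W) :
    Even ((cs.rightInvSeq (alternatingWord i j (2 * M i j))).count w) := by
  set m := M i j with hm
  set L := cs.rightInvSeq (alternatingWord i j (2 * m)) with hL
  have hlen : L.length = 2 * m := by
    rw [hL, length_rightInvSeq, length_alternatingWord]
  have htd : L.take m = L.drop m := by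
    apply List.ext_getElem
    · rw [List.length_take, List.length_drop, hlen]; omega
    · intro k h1 h2
      have hk : k < m := by rw [List.length_take, hlen] at h1; omega
      have hkl : k < L.length := by omega
      have hmkl : m + k < L.length := by omega
      rw [List.IsPrefix.getElem (L.take_prefix m) h1]
      have hgd : (drop m L)[k] = L[m + k]'hmkl := List.getElem_drop
      rw [hgd, ← List.getD_eq_getElem L 1 hkl, ← List.getD_eq_getElem L 1 hmkl]
      exact (ris_alt_half cs i j k hk).symm
  have : L.count w = (L.take m).count w + (L.drop m).count w := by
    conv_lhs => rw [← List.take_append_drop m L]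
    rw [List.count_append]
  rw [this, htd]
  exact ⟨(L.drop m).count w, by omega⟩

lemma prod_map_pow {G : Type*} [Monoid G] (f : B → G) (i j : B) (m : ℕ) :
    (List.map f (alternatingWord i j (2 * m))).prod = (f i * f j) ^ m := by
  induction m with
  | zero => simp [alternatingWord]
  | succ m ih =>
    have h : 2 * (m + 1) = (2 * m + 1) + 1 := by omega
    rw [h, alternatingWord_succ', alternatingWord_succ',
      if_neg (by simp [Nat.even_add_one, even_two_mul]), if_pos (even_two_mul m),
      List.map_cons, List.map_cons, List.prod_cons, List.prod_cons, ih, pow_succ',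
      mul_assoc]

lemma tits_liftable : M.IsLiftable (tits cs) := by
  intro i j
  apply Equiv.ext
  rintro ⟨w, b⟩
  rw [← prod_map_pow (tits cs) i j (M i j)]
  rw [prod_map_tits]
  have h1 : π (alternatingWord i j (2 * M i j)) = 1 := by
    have h2 : π (alternatingWord i j (2 * M i j)) = (σ i * σ j) ^ (M i j) := by
      have : π (alternatingWord i j (2 * M i j))
          = (List.map cs.simple (alternatingWord i j (2 * M i j))).prod := rfl
      rw [this, prod_map_pow]
    rw [h2, cs.simple_mul_simple_pow]
  rw [h1, if_pos (even_count_ris_alt cs i j w)]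
  simp

noncomputable def phi : W →* Equiv.Perm (W × Bool) := cs.lift ⟨tits cs, tits_liftable cs⟩

lemma phi_wordProd (ω : List B) : phi cs (π ω) = (List.map (tits cs) ω).prod := by
  show phi cs (List.map cs.simple ω).prod = _
  rw [map_list_prod, List.map_map]
  congr 1
  apply List.map_congr_left
  intro a _
  exact cs.lift_apply_simple (tits_liftable cs) a

lemma parity_inv {ω ω' : List B} (h : π ω = π ω') (w : W) :
    Even ((cs.rightInvSeq ω).count w) ↔ Even ((cs.rightInvSeq ω').count w) := by
  have h2 : (List.map (tits cs) ω).prod (w, true) = (List.map (tits cs) ω').prod (w, true) := by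
    rw [← phi_wordProd, ← phi_wordProd, h]
  rw [prod_map_tits, prod_map_tits, Prod.ext_iff] at h2
  obtain ⟨-, h3⟩ := h2
  split_ifs at h3 with p1 p2 p2 <;> simp_all
  exact iff_of_false (by simpa using p1) (by simpa using p2)

end CoxAux

namespace CoxAux
open CoxeterSystem List

variable {B W : Type*} [Group W] [DecidableEq W] {M : CoxeterMatrix B}
  (cs : CoxeterSystem M W)

local prefix:100 "σ" => cs.simple
local prefix:100 "π" => cs.wordProd

lemma right_exchange {ω : List B} {i : B}
    (hlt : cs.length (π ω * σ i) < cs.length (π ω)) :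
    ∃ k < ω.length, π ω * σ i = π (ω.eraseIdx k) := by
  obtain ⟨τ, hτred, hτ⟩ := cs.exists_reduced_word' (π ω * σ i)
  have hπ : π (τ.concat i) = π ω := by
    rw [cs.wordProd_concat, ← hτ, mul_assoc, cs.simple_mul_simple_self, mul_one]
  have hmem : σ i ∉ cs.rightInvSeq τ := by
    intro hmem
    have h1 := (cs.isRightInversion_of_mem_rightInvSeq hτred hmem).2
    have h2 : π τ * σ i = π ω := by
      rw [← hτ, mul_assoc, cs.simple_mul_simple_self, mul_one]
    rw [h2, ← hτ] at h1
    omega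
  have hcnt : (cs.rightInvSeq (τ.concat i)).count (σ i) = 1 := by
    rw [cs.rightInvSeq_concat, List.concat_eq_append, List.count_append]
    have hfix : (MulAut.conj (σ i)) (σ i) = σ i := by
      simp [MulAut.conj_apply, cs.simple_mul_simple_self, cs.inv_simple]
    have h3 : (List.map (⇑(MulAut.conj (σ i))) (cs.rightInvSeq τ)).count (σ i) = 0 := by
      rw [List.count_eq_zero]
      intro hin
      obtain ⟨t, ht, heq⟩ := List.mem_map.mp hin
      have : t = σ i := (MulAut.conj (σ i)).injective (heq.trans hfix.symm)
      exact hmem (this ▸ ht)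
    rw [h3]
    simp
  have hodd : ¬ Even ((cs.rightInvSeq ω).count (σ i)) := by
    rw [← parity_inv cs hπ, hcnt]
    simp
  have hmem' : σ i ∈ cs.rightInvSeq ω := by
    by_contra hno
    rw [List.count_eq_zero.mpr hno] at hodd
    simp at hodd
  obtain ⟨k, hk, hget⟩ := List.getElem_of_mem hmem'
  rw [cs.length_rightInvSeq] at hk
  refine ⟨k, hk, ?_⟩
  have := cs.wordProd_mul_getD_rightInvSeq ω k
  rwa [List.getD_eq_getElem _ 1 (by rw [cs.length_rightInvSeq]; exact hk), hget] at this

lemma left_exchange {ω : List B} {i : B}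
    (hlt : cs.length (σ i * π ω) < cs.length (π ω)) :
    ∃ ψ : List B, ψ.Sublist ω ∧ ψ.length + 1 = ω.length ∧ π ψ = σ i * π ω := by
  have h1 : cs.length (π ω.reverse * σ i) < cs.length (π ω.reverse) := by
    rw [cs.wordProd_reverse]
    have e1 : (π ω)⁻¹ * σ i = (σ i * π ω)⁻¹ := by
      rw [mul_inv_rev, cs.inv_simple]
    rw [e1, cs.length_inv, cs.length_inv]
    exact hlt
  obtain ⟨k, hk, heq⟩ := right_exchange cs h1
  refine ⟨(ω.reverse.eraseIdx k).reverse, ?_, ?_, ?_⟩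
  · have h2 := (List.eraseIdx_sublist ω.reverse k).reverse
    rwa [List.reverse_reverse] at h2
  · rw [List.length_reverse] at hk
    rw [List.length_reverse, List.length_eraseIdx]
    simp only [List.length_reverse]
    rw [if_pos hk]
    omega
  · rw [cs.wordProd_reverse, ← heq, cs.wordProd_reverse, mul_inv_rev, cs.inv_simple, inv_inv]

lemma deletion (ω : List B) : ∃ ψ : List B, ψ.Sublist ω ∧ cs.IsReduced ψ ∧ π ψ = π ω := by
  induction ω with
  | nil =>
    refine ⟨[], List.Sublist.refl _, ?_, rfl⟩
    show cs.length (π []) = ([] : List B).length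
    simp
  | cons i τ ih =>
    obtain ⟨ψ, hsub, hred, hprod⟩ := ih
    rcases cs.length_simple_mul (π ψ) i with hup | hdown
    · refine ⟨i :: ψ, hsub.cons₂ i, ?_, ?_⟩
      · show cs.length (π (i :: ψ)) = (i :: ψ).length
        rw [cs.wordProd_cons, hup, hred, List.length_cons]
      · rw [cs.wordProd_cons, cs.wordProd_cons, hprod]
    · have hlt : cs.length (σ i * π ψ) < cs.length (π ψ) := by omega
      obtain ⟨ψ', hsub', hlen', hprod'⟩ := left_exchange cs hlt
      refine ⟨ψ', (hsub'.trans hsub).trans (List.sublist_cons_self i τ), ?_, ?_⟩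
      · show cs.length (π ψ') = ψ'.length
        have hr : cs.length (π ψ) = ψ.length := hred
        rw [hprod']
        omega
      · rw [hprod', hprod, ← cs.wordProd_cons]

lemma letters_det : ∀ (ω ω' : List B), cs.IsReduced ω → cs.IsReduced ω' → π ω = π ω' →
    ∀ c ∈ ω, ∃ c' ∈ ω', σ c' = σ c := by
  intro ω
  induction ω with
  | nil =>
    intro ω' _ _ _ c hc
    simp at hc
  | cons j τ ih =>
    intro ω' hred hred' hprod c hc
    have hτred : cs.IsReduced τ := by
      have h := CoxeterSystem.IsReduced.drop (ω := j :: τ) hred 1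
      simpa using h
    have hℓred : cs.length (π (j :: τ)) = τ.length + 1 := by
      have h : cs.length (π (j :: τ)) = (j :: τ).length := hred
      simpa using h
    have h1 : σ j * π ω' = π τ := by
      rw [← hprod, cs.wordProd_cons, cs.simple_mul_simple_cancel_left]
    have hℓτ : cs.length (π τ) = τ.length := hτred
    have hlt : cs.length (σ j * π ω') < cs.length (π ω') := by
      rw [h1, ← hprod, hℓτ, hℓred]
      omega
    obtain ⟨ψ, hsub, hlen, hψprod⟩ := left_exchange cs hlt
    have hψτ : π ψ = π τ := by rw [hψprod, h1]
    have hω'len : ω'.length = τ.length + 1 := by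
      have h : cs.length (π ω') = ω'.length := hred'
      rw [← hprod, hℓred] at h
      omega
    have hψred : cs.IsReduced ψ := by
      show cs.length (π ψ) = ψ.length
      rw [hψτ, hℓτ]
      omega
    rcases List.mem_cons.mp hc with rfl | hcτ
    · have h2 : σ c = π (ψ ++ ω'.reverse) := by
        rw [cs.wordProd_append, cs.wordProd_reverse, hψprod, mul_assoc,
          mul_inv_cancel, mul_one]
      obtain ⟨ρ, hρsub, hρred, hρprod⟩ := deletion cs (ψ ++ ω'.reverse)
      have hρℓ : cs.length (π ρ) = ρ.length := hρred
      have hρlen : ρ.length = 1 := by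
        rw [← hρℓ, hρprod, ← h2, cs.length_simple]
      obtain ⟨c', hc'⟩ := List.length_eq_one_iff.mp hρlen
      have hsc : σ c' = σ c := by
        have h3 := hρprod
        rw [hc', cs.wordProd_singleton, ← h2] at h3
        exact h3
      have hcmem : c' ∈ ω' := by
        have h4 : c' ∈ ψ ++ ω'.reverse := hρsub.subset (by rw [hc']; exact List.mem_singleton_self c')
        rcases List.mem_append.mp h4 with h | h
        · exact hsub.subset h
        · exact List.mem_reverse.mp h
      exact ⟨c', hcmem, hsc⟩
    · obtain ⟨c', hc'mem, hsc⟩ := ih ψ hτred hψred hψτ.symm c hcτ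
      exact ⟨c', hsub.subset hc'mem, hsc⟩

end CoxAux

namespace CoxAux
open CoxeterSystem List

variable {B W : Type*} [Group W] [DecidableEq W] {M : CoxeterMatrix B}
  (cs : CoxeterSystem M W)

local prefix:100 "σ" => cs.simple
local prefix:100 "π" => cs.wordProd

lemma mem_supp_of_letter {μ : List B} {w : W} (hred : cs.IsReduced μ) (hprod : π μ = w)
    {c : B} (hc : c ∈ μ) {i : B} (hsc : σ c = σ i) : i ∈ cs.supp w := by
  set ν : List B := μ.map (fun d => if σ d = σ i then i else d) with hν
  have hmap : List.map cs.simple ν = List.map cs.simple μ := by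
    rw [hν, List.map_map]
    apply List.map_congr_left
    intro d _
    by_cases h : σ d = σ i
    · simp [h]
    · simp [h]
  have hπ : π ν = π μ := by
    show (List.map cs.simple ν).prod = (List.map cs.simple μ).prod
    rw [hmap]
  refine ⟨ν, ?_, ?_, ?_⟩
  · show cs.length (π ν) = ν.length
    have h1 : cs.length (π μ) = μ.length := hred
    rw [hπ, h1, hν, List.length_map]
  · rw [hπ, hprod]
  · exact List.mem_map.mpr ⟨c, hc, by simp [hsc]⟩

lemma supp_le_of_bruhatLE {u w : W} (h : cs.BruhatLE u w) : cs.supp u ⊆ cs.supp w := by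
  obtain ⟨μ, hμred, hμprod, μ', hμ'sub, hμ'prod⟩ := h
  intro i hi
  obtain ⟨ξ, hξred, hξprod, hiξ⟩ := hi
  obtain ⟨ν, hνsub, hνred, hνprod⟩ := deletion cs μ'
  obtain ⟨c, hcν, hsc⟩ := letters_det cs ξ ν hξred hνred
    (by rw [hξprod, hνprod, hμ'prod]) i hiξ
  exact mem_supp_of_letter cs hμred hμprod ((hνsub.trans hμ'sub).subset hcν) hsc

lemma supp_mul_le (u v : W) : cs.supp (u * v) ⊆ cs.supp u ∪ cs.supp v := by
  obtain ⟨α, hαred, hαprod⟩ := cs.exists_reduced_word' u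
  obtain ⟨β, hβred, hβprod⟩ := cs.exists_reduced_word' v
  obtain ⟨γ, hγsub, hγred, hγprod⟩ := deletion cs (α ++ β)
  intro i hi
  obtain ⟨ξ, hξred, hξprod, hiξ⟩ := hi
  obtain ⟨c, hcγ, hsc⟩ := letters_det cs ξ γ hξred hγred
    (by rw [hξprod, hγprod, cs.wordProd_append, ← hαprod, ← hβprod]) i hiξ
  rcases List.mem_append.mp (hγsub.subset hcγ) with h | h
  · exact Or.inl (mem_supp_of_letter cs hαred hαprod.symm h hsc)
  · exact Or.inr (mem_supp_of_letter cs hβred hβprod.symm h hsc)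

omit [DecidableEq W] in
lemma bruhatLE_refl (w : W) : cs.BruhatLE w w := by
  obtain ⟨ω, h1, h2⟩ := cs.exists_reduced_word' w
  exact ⟨ω, h1, h2.symm, ω, List.Sublist.refl _, h2.symm⟩

omit [DecidableEq W] in
lemma one_bruhatLE (w : W) : cs.BruhatLE 1 w := by
  obtain ⟨ω, h1, h2⟩ := cs.exists_reduced_word' w
  exact ⟨ω, h1, h2.symm, [], List.nil_sublist _, cs.wordProd_nil⟩

end CoxAux

/-- For the Demazure product `x * y`,
`supp(x * y) = supp(x) ∪ supp(y)`. -/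
theorem stmt2 {B W : Type*} [Group W] {M : CoxeterMatrix B} (cs : CoxeterSystem M W)
    (x y m : W) (hm : cs.IsDemazureProd x y m) :
    cs.supp m = cs.supp x ∪ cs.supp y := by
  classical
  obtain ⟨⟨u, u', hu, hu', hmul⟩, hmax⟩ := hm
  subst hmul
  have hx : cs.BruhatLE x (u * u') :=
    hmax x ⟨x, 1, CoxAux.bruhatLE_refl cs x, CoxAux.one_bruhatLE cs y, (mul_one x).symm⟩
  have hy : cs.BruhatLE y (u * u') :=
    hmax y ⟨1, y, CoxAux.one_bruhatLE cs x, CoxAux.bruhatLE_refl cs y, (one_mul y).symm⟩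
  apply Set.Subset.antisymm
  · intro i hi
    rcases CoxAux.supp_mul_le cs u u' hi with h | h
    · exact Or.inl (CoxAux.supp_le_of_bruhatLE cs hu h)
    · exact Or.inr (CoxAux.supp_le_of_bruhatLE cs hu' h)
  · exact Set.union_subset (CoxAux.supp_le_of_bruhatLE cs hx)
      (CoxAux.supp_le_of_bruhatLE cs hy)
end
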